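/- The Jaccard distance 1 − J(A,B) is a metric on finite nonempty subsets of a fixed finite set. -/

import Mathlib

open Finset

private lemma jac_arith (a b c d e f g : ℤ) (ha : 0 ≤ a) (hb : 0 ≤ b) (hc : 0 ≤ c)
    (hd : 0 ≤ d) (he : 0 ≤ e) (hf : 0 ≤ f) (hg : 0 ≤ g) :
    ((a+c+d+e+f+g) - (e+g)) * (a+b+c+d+e+f+g) ≤
      (((a+b+d+e+f+g) - (d+g)) + ((b+c+d+e+f+g) - (f+g))) * (a+c+d+e+f+g) := by
  nlinarith [mul_nonneg hb ha, mul_nonneg hb hc, mul_nonneg hb hd, mul_nonneg hb hf,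
    mul_nonneg hb he, mul_nonneg hb hg, mul_nonneg he ha, mul_nonneg he hc,
    mul_nonneg he hd, mul_nonneg he hf, mul_nonneg he he, mul_nonneg he hg]

private lemma card_ind {α : Type*} [Fintype α] [DecidableEq α] (X : Finset α) :
    X.card = ∑ x ∈ Finset.univ, if x ∈ X then 1 else 0 := by
  simp [Finset.sum_ite_mem]

private lemma jac_key {α : Type*} [Fintype α] [DecidableEq α] (A B C : Finset α) :
    (((A ∪ C).card : ℤ) - ((A ∩ C).card : ℤ)) * ((A ∪ B ∪ C).card : ℤ) ≤
      ((((A ∪ B).card : ℤ) - ((A ∩ B).card : ℤ)) +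
        (((B ∪ C).card : ℤ) - ((B ∩ C).card : ℤ))) * ((A ∪ C).card : ℤ) := by
  have hAC : (A ∪ C).card = (A \ (B ∪ C)).card + (C \ (A ∪ B)).card +
      ((A ∩ B) \ C).card + ((A ∩ C) \ B).card + ((B ∩ C) \ A).card + (A ∩ B ∩ C).card := by
    simp only [card_ind, ← Finset.sum_add_distrib]
    refine Finset.sum_congr rfl fun x _ => ?_
    by_cases h1 : x ∈ A <;> by_cases h2 : x ∈ B <;> by_cases h3 : x ∈ C <;> simp [h1, h2, h3]
  have hiAC : (A ∩ C).card = ((A ∩ C) \ B).card + (A ∩ B ∩ C).card := by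
    simp only [card_ind, ← Finset.sum_add_distrib]
    refine Finset.sum_congr rfl fun x _ => ?_
    by_cases h1 : x ∈ A <;> by_cases h2 : x ∈ B <;> by_cases h3 : x ∈ C <;> simp [h1, h2, h3]
  have hAB : (A ∪ B).card = (A \ (B ∪ C)).card + (B \ (A ∪ C)).card +
      ((A ∩ B) \ C).card + ((A ∩ C) \ B).card + ((B ∩ C) \ A).card + (A ∩ B ∩ C).card := by
    simp only [card_ind, ← Finset.sum_add_distrib]
    refine Finset.sum_congr rfl fun x _ => ?_
    by_cases h1 : x ∈ A <;> by_cases h2 : x ∈ B <;> by_cases h3 : x ∈ C <;> simp [h1, h2, h3]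
  have hiAB : (A ∩ B).card = ((A ∩ B) \ C).card + (A ∩ B ∩ C).card := by
    simp only [card_ind, ← Finset.sum_add_distrib]
    refine Finset.sum_congr rfl fun x _ => ?_
    by_cases h1 : x ∈ A <;> by_cases h2 : x ∈ B <;> by_cases h3 : x ∈ C <;> simp [h1, h2, h3]
  have hBC : (B ∪ C).card = (B \ (A ∪ C)).card + (C \ (A ∪ B)).card +
      ((A ∩ B) \ C).card + ((A ∩ C) \ B).card + ((B ∩ C) \ A).card + (A ∩ B ∩ C).card := by
    simp only [card_ind, ← Finset.sum_add_distrib]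
    refine Finset.sum_congr rfl fun x _ => ?_
    by_cases h1 : x ∈ A <;> by_cases h2 : x ∈ B <;> by_cases h3 : x ∈ C <;> simp [h1, h2, h3]
  have hiBC : (B ∩ C).card = ((B ∩ C) \ A).card + (A ∩ B ∩ C).card := by
    simp only [card_ind, ← Finset.sum_add_distrib]
    refine Finset.sum_congr rfl fun x _ => ?_
    by_cases h1 : x ∈ A <;> by_cases h2 : x ∈ B <;> by_cases h3 : x ∈ C <;> simp [h1, h2, h3]
  have hN : (A ∪ B ∪ C).card = (A \ (B ∪ C)).card + (B \ (A ∪ C)).card + (C \ (A ∪ B)).card +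
      ((A ∩ B) \ C).card + ((A ∩ C) \ B).card + ((B ∩ C) \ A).card + (A ∩ B ∩ C).card := by
    simp only [card_ind, ← Finset.sum_add_distrib]
    refine Finset.sum_congr rfl fun x _ => ?_
    by_cases h1 : x ∈ A <;> by_cases h2 : x ∈ B <;> by_cases h3 : x ∈ C <;> simp [h1, h2, h3]
  rw [hAC, hiAC, hAB, hiAB, hBC, hiBC, hN]
  push_cast
  have h := jac_arith ((A \ (B ∪ C)).card : ℤ) ((B \ (A ∪ C)).card : ℤ)
    ((C \ (A ∪ B)).card : ℤ) (((A ∩ B) \ C).card : ℤ) (((A ∩ C) \ B).card : ℤ)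
    (((B ∩ C) \ A).card : ℤ) ((A ∩ B ∩ C).card : ℤ)
    (Nat.cast_nonneg _) (Nat.cast_nonneg _) (Nat.cast_nonneg _) (Nat.cast_nonneg _)
    (Nat.cast_nonneg _) (Nat.cast_nonneg _) (Nat.cast_nonneg _)
  linarith [h]

/-- the Jaccard distance d(A,B) = 1 − |A∩B|/|A∪B| is a metric on the
finite nonempty subsets of a fixed finite set: it is symmetric, vanishes exactly on
the diagonal, and satisfies the triangle inequality. -/
theorem stmt12 {α : Type*} [Fintype α] [DecidableEq α]
    (d : Finset α → Finset α → ℝ)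
    (hd : ∀ A B : Finset α, d A B = 1 - ((A ∩ B).card : ℝ) / ((A ∪ B).card : ℝ)) :
    ∀ A B C : Finset α, A.Nonempty → B.Nonempty → C.Nonempty →
      (0 ≤ d A B) ∧ (d A B = d B A) ∧ (d A B = 0 ↔ A = B) ∧
        (d A C ≤ d A B + d B C) := by
  intro A B C hA hB hC
  have huAB : (0:ℝ) < ((A ∪ B).card : ℝ) := by
    exact_mod_cast Finset.card_pos.mpr (hA.mono Finset.subset_union_left)
  have huAC : (0:ℝ) < ((A ∪ C).card : ℝ) := by
    exact_mod_cast Finset.card_pos.mpr (hA.mono Finset.subset_union_left)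
  have huBC : (0:ℝ) < ((B ∪ C).card : ℝ) := by
    exact_mod_cast Finset.card_pos.mpr (hB.mono Finset.subset_union_left)
  have hn : (0:ℝ) < ((A ∪ B ∪ C).card : ℝ) := by
    exact_mod_cast Finset.card_pos.mpr
      ((hA.mono Finset.subset_union_left).mono Finset.subset_union_left)
  have hiuAB : ((A ∩ B).card : ℝ) ≤ ((A ∪ B).card : ℝ) := by
    exact_mod_cast Finset.card_le_card (Finset.inter_subset_union)
  have hiuAC : ((A ∩ C).card : ℝ) ≤ ((A ∪ C).card : ℝ) := by
    exact_mod_cast Finset.card_le_card (Finset.inter_subset_union)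
  have hiuBC : ((B ∩ C).card : ℝ) ≤ ((B ∪ C).card : ℝ) := by
    exact_mod_cast Finset.card_le_card (Finset.inter_subset_union)
  refine ⟨?_, ?_, ?_, ?_⟩
  · rw [hd]
    have : ((A ∩ B).card : ℝ) / ((A ∪ B).card : ℝ) ≤ 1 :=
      (div_le_one huAB).mpr hiuAB
    linarith
  · rw [hd, hd, Finset.inter_comm, Finset.union_comm]
  · rw [hd]
    constructor
    · intro h
      have h1 : ((A ∩ B).card : ℝ) = ((A ∪ B).card : ℝ) := by
        have : ((A ∩ B).card : ℝ) / ((A ∪ B).card : ℝ) = 1 := by linarith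
        field_simp at this
        exact_mod_cast this
      have h2 : (A ∪ B).card ≤ (A ∩ B).card := by exact_mod_cast le_of_eq h1.symm
      have heq : A ∩ B = A ∪ B :=
        Finset.eq_of_subset_of_card_le Finset.inter_subset_union h2
      apply Finset.Subset.antisymm
      · intro x hx
        have hx' : x ∈ A ∩ B := heq ▸ Finset.mem_union_left _ hx
        exact (Finset.mem_inter.mp hx').2
      · intro x hx
        have hx' : x ∈ A ∩ B := heq ▸ Finset.mem_union_right _ hx
        exact (Finset.mem_inter.mp hx').1
    · rintro rfl
      have hcard : ((A.card : ℝ)) ≠ 0 := by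
        exact_mod_cast Finset.card_ne_zero.mpr hA
      simp [Finset.inter_self, Finset.union_self, div_self hcard]
  · have e1 : d A C = (((A ∪ C).card : ℝ) - ((A ∩ C).card : ℝ)) / ((A ∪ C).card : ℝ) := by
      rw [hd, one_sub_div huAC.ne']
    have e2 : d A B = (((A ∪ B).card : ℝ) - ((A ∩ B).card : ℝ)) / ((A ∪ B).card : ℝ) := by
      rw [hd, one_sub_div huAB.ne']
    have e3 : d B C = (((B ∪ C).card : ℝ) - ((B ∩ C).card : ℝ)) / ((B ∪ C).card : ℝ) := by
      rw [hd, one_sub_div huBC.ne']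
    rw [e1, e2, e3]
    have hkey : (((A ∪ C).card : ℝ) - ((A ∩ C).card : ℝ)) / ((A ∪ C).card : ℝ) ≤
        ((((A ∪ B).card : ℝ) - ((A ∩ B).card : ℝ)) +
          (((B ∪ C).card : ℝ) - ((B ∩ C).card : ℝ))) / ((A ∪ B ∪ C).card : ℝ) := by
      rw [div_le_div_iff₀ huAC hn]
      exact_mod_cast jac_key A B C
    have hle1 : ((A ∪ B).card : ℝ) ≤ ((A ∪ B ∪ C).card : ℝ) := by
      exact_mod_cast Finset.card_le_card Finset.subset_union_left
    have hle2 : ((B ∪ C).card : ℝ) ≤ ((A ∪ B ∪ C).card : ℝ) := by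
      exact_mod_cast Finset.card_le_card (by
        intro x hx
        rcases Finset.mem_union.mp hx with h | h
        · exact Finset.mem_union_left _ (Finset.mem_union_right _ h)
        · exact Finset.mem_union_right _ h)
    have hstep : ((((A ∪ B).card : ℝ) - ((A ∩ B).card : ℝ)) +
          (((B ∪ C).card : ℝ) - ((B ∩ C).card : ℝ))) / ((A ∪ B ∪ C).card : ℝ) ≤
        (((A ∪ B).card : ℝ) - ((A ∩ B).card : ℝ)) / ((A ∪ B).card : ℝ) +
          (((B ∪ C).card : ℝ) - ((B ∩ C).card : ℝ)) / ((B ∪ C).card : ℝ) := by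
      rw [add_div]
      gcongr
    linarith
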